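/- Let G be the accessibility graph of a graph-labelled tree (T,F) in which every label is a complete graph or a star. Then G contains no induced path P_4 on 4 vertices if and only if there exists a clique node, or a tree-edge, of T towards which every star node of T is oriented (a star node u is oriented towards an edge/node r if the tree-edge e with ρ_u(e) the centre of the star G_u lies on the path from u towards r). -/

import Mathlib

open SimpleGraph

variable {V : Type}

/-- A vertex of a tree is a leaf if it has exactly one neighbour. -/
def IsLeaf (T : SimpleGraph V) (v : V) : Prop := ∃! w, T.Adj v w

/-- Admissibility of a walk in a graph-labelled tree: at every internal vertex of the
walk, the marker vertices corresponding to the two consecutive tree-edges are adjacent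
in the label graph. -/
inductive Admissible (T : SimpleGraph V) (F : ∀ v : V, SimpleGraph (T.neighborSet v)) :
    ∀ {a b : V}, T.Walk a b → Prop
  | nil {a : V} : Admissible T F (SimpleGraph.Walk.nil : T.Walk a a)
  | single {a b : V} (h : T.Adj a b) :
      Admissible T F (SimpleGraph.Walk.cons h SimpleGraph.Walk.nil)
  | cons {a v b c : V} (h1 : T.Adj a v) (h2 : T.Adj v b) (p : T.Walk b c)
      (hadj : (F v).Adj ⟨a, h1.symm⟩ ⟨b, h2⟩)
      (hp : Admissible T F (SimpleGraph.Walk.cons h2 p)) :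
      Admissible T F (SimpleGraph.Walk.cons h1 (SimpleGraph.Walk.cons h2 p))

/-- `b` is accessible from `a`: the (unique) path joining them is admissible. -/
def Accessible (T : SimpleGraph V) (F : ∀ v : V, SimpleGraph (T.neighborSet v))
    (a b : V) : Prop :=
  ∃ p : T.Walk a b, p.IsPath ∧ Admissible T F p

/-- The accessibility graph of a graph-labelled tree: vertices are the leaves of the
tree, two leaves being adjacent iff one is accessible from the other. -/
def accGraph (T : SimpleGraph V) (F : ∀ v : V, SimpleGraph (T.neighborSet v)) :
    SimpleGraph {v : V // IsLeaf T v} :=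
  SimpleGraph.fromRel (fun x y => Accessible T F ↑x ↑y)

/-- A label graph is a complete graph. -/
def CompleteLabel {α : Type} (H : SimpleGraph α) : Prop := ∀ a b : α, a ≠ b → H.Adj a b

/-- A label graph is a star with centre `c`. -/
def StarLabel {α : Type} (H : SimpleGraph α) (c : α) : Prop :=
  ∀ a b : α, H.Adj a b ↔ (a ≠ b ∧ (a = c ∨ b = c))

namespace Stmt8Aux

noncomputable local instance : DecidableEq V := Classical.decEq V

variable (T : SimpleGraph V)

/-- `a` lies on the `x`-side of the edge `wx`. -/
def Sd (w x a : V) : Prop := (T.deleteEdges {s(w,x)}).Reachable x a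

lemma sd_refl (w x : V) : Sd T w x x := Reachable.refl _

lemma walk_ind {G : SimpleGraph V} {P : V → Prop} (h : ∀ a b, G.Adj a b → P a → P b) :
    ∀ {s t : V}, G.Walk s t → P s → P t := by
  intro s t p
  induction p with
  | nil => exact id
  | cons ha _ ih => exact fun hs => ih (h _ _ ha hs)

lemma reach_ind {G : SimpleGraph V} {P : V → Prop} (h : ∀ a b, G.Adj a b → P a → P b)
    {s t : V} (hr : G.Reachable s t) (hs : P s) : P t := by
  obtain ⟨p⟩ := hr; exact walk_ind h p hs

lemma sym2_ne {a b c d : V} (h : ∀ (h1 : a = c) (h2 : b = d), False)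
    (h' : ∀ (h1 : a = d) (h2 : b = c), False) : s(a,b) ≠ s(c,d) := by
  intro he
  rw [Sym2.eq_iff] at he
  rcases he with ⟨h1, h2⟩ | ⟨h1, h2⟩
  · exact h h1 h2
  · exact h' h1 h2

lemma sd_step {w x a b : V} (hab : T.Adj a b) (hne : s(a,b) ≠ s(w,x)) :
    Sd T w x a ↔ Sd T w x b := by
  have hadj : (T.deleteEdges {s(w,x)}).Adj a b := by
    rw [deleteEdges_adj]; exact ⟨hab, by simpa using hne⟩
  exact ⟨fun h => h.trans hadj.reachable, fun h => h.trans hadj.symm.reachable⟩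

lemma sd_symm_edge {w x a : V} : Sd T x w a ↔ (T.deleteEdges {s(w,x)}).Reachable w a := by
  unfold Sd
  rw [Sym2.eq_swap]

lemma sd_notSelf (hT : T.IsTree) {w x : V} (h : T.Adj w x) : ¬ Sd T w x w := by
  have hb := isAcyclic_iff_forall_edge_isBridge.mp hT.IsAcyclic (e := s(w,x)) (by simpa using h)
  rw [isBridge_iff] at hb
  intro hr
  exact hb hr.symm

lemma sd_dichot (hT : T.IsTree) {w x : V} (h : T.Adj w x) (a : V) :
    Sd T w x a ∨ Sd T x w a := by
  have hr : T.Reachable w a := hT.isConnected.preconnected w a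
  refine reach_ind (P := fun z => Sd T w x z ∨ Sd T x w z) ?_ hr
    (Or.inr (sd_refl T x w))
  intro p q hpq hp
  by_cases he : s(p,q) = s(w,x)
  · rw [Sym2.eq_iff] at he
    rcases he with ⟨rfl, rfl⟩ | ⟨rfl, rfl⟩
    · exact Or.inl (sd_refl T _ _)
    · exact Or.inr (sd_refl T _ _)
  · have he' : s(p,q) ≠ s(x,w) := fun hh => he (hh.trans Sym2.eq_swap)
    rcases hp with hp | hp
    · exact Or.inl ((sd_step T (w := w) (x := x) hpq he).mp hp)
    · exact Or.inr ((sd_step T (w := x) (x := w) hpq he').mp hp)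

lemma sd_not_both (hT : T.IsTree) {w x a : V} (h : T.Adj w x) :
    ¬ (Sd T w x a ∧ Sd T x w a) := by
  rintro ⟨h1, h2⟩
  rw [sd_symm_edge] at h2
  exact sd_notSelf T hT h (h1.trans h2.symm)

lemma sd_of_walk_avoid {v x : V} :
    ∀ {s t : V} (p : T.Walk s t), v ∉ p.support → Sd T v x s → Sd T v x t := by
  intro s t p
  induction p with
  | nil => exact fun _ => id
  | @cons s b t ha q ih =>
    intro hv hs
    rw [Walk.support_cons, List.mem_cons] at hv
    push_neg at hv
    have hne : s(s, b) ≠ s(v, x) := by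
      intro he
      rw [Sym2.eq_iff] at he
      rcases he with ⟨rfl, rfl⟩ | ⟨rfl, rfl⟩
      · exact hv.1 rfl
      · exact hv.2 q.start_mem_support
    exact ih hv.2 ((sd_step T ha hne).mp hs)

lemma branch_of_path {v a : V} (hva : v ≠ a) (p : T.Walk v a) (hp : p.IsPath) :
    ∃ x, ∃ _ : T.Adj v x, Sd T v x a ∧ x ∈ p.support.tail := by
  cases p with
  | nil => exact absurd rfl hva
  | cons h q =>
    rw [Walk.cons_isPath_iff] at hp
    refine ⟨_, h, sd_of_walk_avoid T q hp.2 (sd_refl T _ _), ?_⟩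
    rw [Walk.support_cons]
    exact q.start_mem_support

lemma sd_branch (hT : T.IsTree) {v a : V} (hva : v ≠ a) :
    ∃ x, T.Adj v x ∧ Sd T v x a := by
  obtain ⟨p⟩ := hT.isConnected.preconnected v a
  obtain ⟨x, hx, hsd, -⟩ := branch_of_path T hva p.toPath.1 p.toPath.2
  exact ⟨x, hx, hsd⟩

lemma sd_unique (hT : T.IsTree) {v x y a : V} (hx : T.Adj v x) (hy : T.Adj v y)
    (ha : Sd T v x a) (hb : Sd T v y a) : x = y := by
  by_contra hxy
  have base : ¬ Sd T v y x := by
    have hne : s(v,x) ≠ s(v,y) := by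
      intro he
      rw [Sym2.eq_iff] at he
      rcases he with ⟨-, rfl⟩ | ⟨rfl, rfl⟩
      · exact hxy rfl
      · exact hxy rfl
    intro hsd
    exact sd_notSelf T hT hy (((sd_step T hx.symm (by rw [Sym2.eq_swap]; exact hne)).mp hsd))
  have key : ∀ z, Sd T v x z → (Sd T v x z ∧ ¬ Sd T v y z) := by
    intro z hz
    obtain ⟨p⟩ := hz
    refine walk_ind (G := T.deleteEdges {s(v,x)})
      (P := fun z => Sd T v x z ∧ ¬ Sd T v y z) ?_ p ⟨sd_refl T _ _, base⟩
    rintro p' q' hpq ⟨h1, h2⟩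
    rw [deleteEdges_adj] at hpq
    have hq1 : Sd T v x q' := (sd_step T hpq.1 (by simpa using hpq.2)).mp h1
    refine ⟨hq1, ?_⟩
    by_cases he : s(p', q') = s(v, y)
    · rw [Sym2.eq_iff] at he
      rcases he with ⟨rfl, rfl⟩ | ⟨rfl, rfl⟩
      · exact absurd h1 (sd_notSelf T hT hx)
      · exact absurd hq1 (sd_notSelf T hT hx)
    · exact fun hc => h2 ((sd_step T hpq.1 he).mpr hc)
  exact (key a ha).2 hb

/-- Nested half-trees: if `w' ∈ H(v,x)` and `v ∉ H(w',y)` then `H(w',y) ⊆ H(v,x)`. -/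
lemma sd_nest (hT : T.IsTree) {v x w' y : V} (hvx : T.Adj v x) (hw : Sd T v x w')
    (hwy : T.Adj w' y) (hnv : ¬ Sd T w' y v) : ∀ a, Sd T w' y a → Sd T v x a := by
  have hy : Sd T v x y := by
    have hne : s(w', y) ≠ s(v, x) := by
      intro he
      rw [Sym2.eq_iff] at he
      rcases he with ⟨rfl, rfl⟩ | ⟨rfl, rfl⟩
      · exact sd_notSelf T hT hvx hw
      · exact hnv (sd_refl T _ _)
    exact (sd_step T hwy hne).mp hw
  intro a ha
  obtain ⟨p⟩ := ha
  refine (walk_ind (G := T.deleteEdges {s(w',y)})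
    (P := fun z => Sd T v x z ∧ Sd T w' y z) ?_ p ⟨hy, sd_refl T _ _⟩).1
  rintro p' q' hpq ⟨h1, h2⟩
  rw [deleteEdges_adj] at hpq
  have hq2 : Sd T w' y q' := (sd_step T hpq.1 (by simpa using hpq.2)).mp h2
  refine ⟨?_, hq2⟩
  by_cases he : s(p', q') = s(v, x)
  · rw [Sym2.eq_iff] at he
    rcases he with ⟨rfl, rfl⟩ | ⟨rfl, rfl⟩
    · exact absurd h2 hnv
    · exact absurd hq2 hnv
  · exact (sd_step T hpq.1 he).mp h1

/-- Disjointness of half-trees pointing away from each other. -/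
lemma sd_disj (hT : T.IsTree) {u x v y : V} (hux : T.Adj u x) (hvy : T.Adj v y)
    (h1 : ¬ Sd T u x v) (h2 : ¬ Sd T v y u) (hne : s(u,x) ≠ s(v,y)) :
    ∀ z, Sd T u x z → ¬ Sd T v y z := by
  have base : ¬ Sd T v y x := by
    intro hsd
    exact h2 ((sd_step T hux.symm (by rw [Sym2.eq_swap]; exact hne)).mp hsd)
  intro z hz
  obtain ⟨p⟩ := hz
  exact (walk_ind (G := T.deleteEdges {s(u,x)})
    (P := fun z => Sd T u x z ∧ ¬ Sd T v y z) (by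
      rintro p' q' hpq ⟨hp1, hp2⟩
      rw [deleteEdges_adj] at hpq
      have hq1 : Sd T u x q' := (sd_step T hpq.1 (by simpa using hpq.2)).mp hp1
      refine ⟨hq1, ?_⟩
      by_cases he : s(p', q') = s(v, y)
      · rw [Sym2.eq_iff] at he
        rcases he with ⟨rfl, rfl⟩ | ⟨rfl, rfl⟩
        · exact absurd hp1 h1
        · exact absurd hq1 h1
      · exact fun hc => hp2 ((sd_step T hpq.1 he).mpr hc))
    p ⟨sd_refl T _ _, base⟩).2

/-- Complement-branch lemma: if `z ∈ H(u,cu)`, `u ∈ H(z,y)` and `a ∉ H(u,cu)` then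
`a ∈ H(z,y)`. -/
lemma sd_compl (hT : T.IsTree) {u cu z y a : V} (huc : T.Adj u cu) (hzy : T.Adj z y)
    (h1 : Sd T u cu z) (h2 : Sd T z y u) (h3 : ¬ Sd T u cu a) (h4 : a ≠ z) :
    Sd T z y a := by
  by_cases hau : a = u
  · exact hau ▸ h2
  obtain ⟨y', hy', ha'⟩ := sd_branch T hT (Ne.symm h4)
  by_cases hyy : y' = y
  · exact hyy ▸ ha'
  have hnu : ¬ Sd T z y' u := fun hc => hyy (sd_unique T hT hy' hzy hc h2)
  exact absurd (sd_nest T hT huc h1 hy' hnu a ha') h3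

/-! ### Same-side relation -/

/-- `a` and `b` lie in a common branch at `v`. -/
def SS (v a b : V) : Prop := ∃ y, T.Adj v y ∧ Sd T v y a ∧ Sd T v y b

lemma ss_symm {v a b : V} (h : SS T v a b) : SS T v b a := by
  obtain ⟨y, h1, h2, h3⟩ := h; exact ⟨y, h1, h3, h2⟩

lemma ss_trans (hT : T.IsTree) {v a b c : V} (h1 : SS T v a b) (h2 : SS T v b c) :
    SS T v a c := by
  obtain ⟨y, hy, hya, hyb⟩ := h1
  obtain ⟨y', hy', hyb', hyc⟩ := h2
  have : y = y' := sd_unique T hT hy hy' hyb hyb'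
  exact ⟨y, hy, hya, this ▸ hyc⟩

lemma not_ss_mid (hT : T.IsTree) {v a b c : V} (h : ¬ SS T v a c) :
    ¬ SS T v a b ∨ ¬ SS T v b c := by
  by_cases h1 : SS T v a b
  · exact Or.inr (fun h2 => h (ss_trans T hT h1 h2))
  · exact Or.inl h1

lemma ss_adj (hT : T.IsTree) {v w x : V} (hwx : T.Adj w x) (hvw : v ≠ w) (hvx : v ≠ x) :
    SS T v w x := by
  obtain ⟨y, hy, hsd⟩ := sd_branch T hT hvw
  refine ⟨y, hy, hsd, (sd_step T hwx ?_).mp hsd⟩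
  exact sym2_ne (fun h1 _ => hvw h1.symm) (fun _ h2 => hvx h2.symm)

lemma ss_shift (hT : T.IsTree) {v w x ℓ : V} (hwx : T.Adj w x) (hvw : v ≠ w) (hvx : v ≠ x)
    (h : SS T v x ℓ) : SS T v w ℓ := by
  obtain ⟨y, hy, hyx, hyl⟩ := h
  refine ⟨y, hy, (sd_step T hwx ?_).mpr hyx, hyl⟩
  exact sym2_ne (fun h1 _ => hvw h1.symm) (fun _ h2 => hvx h2.symm)

/-! ### Stars -/

variable (F : ∀ v : V, SimpleGraph (T.neighborSet v))

/-- `w` is an internal star node with centre (towards) `c`. -/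
def Star (w c : V) : Prop := ¬ IsLeaf T w ∧ ∃ h : T.Adj w c, StarLabel (F w) ⟨c, h⟩

lemma Star.adj {w c : V} (h : Star T F w c) : T.Adj w c := h.2.choose

lemma star_ne_leaf {w c l : V} (h : Star T F w c) (hl : IsLeaf T l) : w ≠ l :=
  fun he => h.1 (he ▸ hl)

lemma exists_third (hdeg : ∀ w : V, ¬ IsLeaf T w → 3 ≤ (T.neighborSet w).ncard)
    {w : V} (hw : ¬ IsLeaf T w) (a b : V) : ∃ t, T.Adj w t ∧ t ≠ a ∧ t ≠ b := by
  by_contra h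
  push_neg at h
  have hsub : T.neighborSet w ⊆ {a, b} := by
    intro t ht
    by_cases h1 : t = a
    · exact Or.inl h1
    · by_cases h2 : t = b
      · exact Or.inr h2
      · exact absurd h2 (not_not_intro (h t ht h1))
  have := (hdeg w hw).trans (Set.ncard_le_ncard hsub (Set.toFinite _))
  have h2 : ({a, b} : Set V).ncard ≤ 2 := by
    apply (Set.ncard_insert_le _ _).trans
    simp [Set.ncard_singleton]
  omega

lemma star_centre_unique (hT : T.IsTree)
    (hdeg : ∀ w : V, ¬ IsLeaf T w → 3 ≤ (T.neighborSet w).ncard)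
    {w c c' : V} (h : Star T F w c) (h' : Star T F w c') : c = c' := by
  by_contra hcc
  obtain ⟨hw, hadj, hst⟩ := h
  obtain ⟨-, hadj', hst'⟩ := h'
  obtain ⟨t, hwt, htc, htc'⟩ := exists_third T hdeg hw c c'
  have hadjct : (F w).Adj ⟨c, hadj⟩ ⟨t, hwt⟩ := by
    rw [hst]
    refine ⟨fun he => htc (congrArg Subtype.val he).symm, Or.inl rfl⟩
  rw [hst'] at hadjct
  rcases hadjct.2 with he | he
  · exact hcc (congrArg Subtype.val he)
  · exact htc' (congrArg Subtype.val he)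

lemma clique_not_star (hdeg : ∀ w : V, ¬ IsLeaf T w → 3 ≤ (T.neighborSet w).ncard)
    {w c : V} (hw : ¬ IsLeaf T w) (hcl : ∀ a b : ↥(T.neighborSet w), a ≠ b → (F w).Adj a b)
    (h : Star T F w c) : False := by
  obtain ⟨-, hadj, hst⟩ := h
  obtain ⟨t, hwt, htc, -⟩ := exists_third T hdeg hw c c
  obtain ⟨t', hwt', htc', htt⟩ := exists_third T hdeg hw c t
  have : (F w).Adj ⟨t, hwt⟩ ⟨t', hwt'⟩ :=
    hcl _ _ (fun he => htt ((congrArg Subtype.val he).symm))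
  rw [hst] at this
  rcases this.2 with he | he
  · exact htc (congrArg Subtype.val he)
  · exact htc' (congrArg Subtype.val he)

/-! ### Accessibility and the side-calculus -/

def AccCond (a b : V) : Prop :=
  ∀ v cv, Star T F v cv → v ≠ a → v ≠ b → ¬ SS T v a b → Sd T v cv a ∨ Sd T v cv b

lemma accCond_symm {a b : V} (h : AccCond T F a b) : AccCond T F b a := by
  intro v cv hst h1 h2 hss
  exact (h v cv hst h2 h1 (fun hc => hss (ss_symm T hc))).symm

lemma adm_tail {a x c : V} {h : T.Adj a x} {q : T.Walk x c}
    (hadm : Admissible T F (Walk.cons h q)) : Admissible T F q := by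
  cases hadm with
  | single _ => exact Admissible.nil
  | cons _ _ _ _ hp => exact hp

lemma adm_mid {a x y c : V} {h : T.Adj a x} {h2 : T.Adj x y} {q : T.Walk y c}
    (hadm : Admissible T F (Walk.cons h (Walk.cons h2 q))) :
    (F x).Adj ⟨a, h.symm⟩ ⟨y, h2⟩ := by
  cases hadm with
  | cons _ _ _ hadj _ => exact hadj

lemma cond_of_adm (hT : T.IsTree) :
    ∀ {a c : V} (p : T.Walk a c), p.IsPath → Admissible T F p →
      ∀ v cv, Star T F v cv → v ∈ p.support → v ≠ a → v ≠ c →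
        Sd T v cv a ∨ Sd T v cv c := by
  intro a c p
  induction p with
  | nil =>
    intro _ _ v cv _ hv hva _
    rw [Walk.support_nil, List.mem_singleton] at hv
    exact absurd hv hva
  | @cons a x c h q ih =>
    cases q with
    | nil =>
      intro hp hadm v cv hstar hv hva hvc
      rw [Walk.support_cons, Walk.support_nil, List.mem_cons] at hv
      rcases hv with hv | hv
      · exact absurd hv hva
      · rw [List.mem_singleton] at hv; exact absurd hv hvc
    | @cons x y c h2 q2 =>
      intro hp hadm v cv hstar hv hva hvc
      have hpath2 : (Walk.cons h2 q2).IsPath := hp.of_cons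
      have hxq2 : x ∉ q2.support := by
        have := hp.2
        rw [Walk.support_cons, List.nodup_cons] at this
        have := this.2
        rw [Walk.support_cons, List.nodup_cons] at this
        exact this.1
      by_cases hvx : v = x
      · subst hvx
        have hadj := adm_mid T F hadm
        obtain ⟨-, hadj', hst⟩ := hstar
        rw [hst] at hadj
        have hsyc : Sd T v y c := sd_of_walk_avoid T q2 hxq2 (sd_refl T _ _)
        rcases hadj.2 with he | he
        · have : a = cv := congrArg Subtype.val he
          subst this
          exact Or.inl (sd_refl T _ _)
        · have : y = cv := congrArg Subtype.val he
          subst this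
          exact Or.inr hsyc
      · have hv2 : v ∈ (Walk.cons h2 q2).support := by
          rw [Walk.support_cons, List.mem_cons] at hv
          rcases hv with hv | hv
          · exact absurd hv hva
          · exact hv
        rcases ih hpath2 (adm_tail T F hadm) v cv hstar hv2 hvx hvc with hc | hc
        · refine Or.inl ((sd_step T h ?_).mpr hc)
          exact sym2_ne (fun h1 _ => hva h1.symm) (fun _ h2 => hvx h2.symm)
        · exact Or.inr hc

lemma adm_of_cond (hT : T.IsTree)
    (hCS : ∀ w : V, ¬ IsLeaf T w → CompleteLabel (F w) ∨ ∃ c, StarLabel (F w) c) :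
    ∀ {a c : V} (p : T.Walk a c), p.IsPath →
      (∀ v cv, Star T F v cv → v ∈ p.support → v ≠ a → v ≠ c →
        Sd T v cv a ∨ Sd T v cv c) →
      Admissible T F p := by
  intro a c p
  induction p with
  | nil => exact fun _ _ => Admissible.nil
  | @cons a x c h q ih =>
    intro hp hcond
    cases q with
    | nil => exact Admissible.single h
    | @cons x y c h2 q2 =>
      have hpath2 : (Walk.cons h2 q2).IsPath := hp.of_cons
      have hnodup := hp.2
      rw [Walk.support_cons, List.nodup_cons] at hnodup
      have hax : a ∉ (Walk.cons h2 q2).support := hnodup.1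
      have hxq2 : x ∉ q2.support := by
        have := hnodup.2
        rw [Walk.support_cons, List.nodup_cons] at this
        exact this.1
      have hxsup : x ∈ (Walk.cons h (Walk.cons h2 q2)).support := by
        rw [Walk.support_cons]
        exact List.mem_cons_of_mem _ (Walk.start_mem_support _)
      have hay : a ≠ y := by
        intro he
        subst he
        apply hax
        rw [Walk.support_cons]
        exact List.mem_cons_of_mem _ q2.start_mem_support
      have hxc : x ≠ c := by
        intro he
        exact hxq2 (he ▸ Walk.end_mem_support q2)
      have hxa : x ≠ a := h.ne'
      have hxleaf : ¬ IsLeaf T x := by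
        rintro ⟨z, -, huniq⟩
        exact hay ((huniq a h.symm).trans (huniq y h2).symm)
      have hsyc : Sd T x y c := sd_of_walk_avoid T q2 hxq2 (sd_refl T _ _)
      have hadjmid : (F x).Adj ⟨a, h.symm⟩ ⟨y, h2⟩ := by
        rcases hCS x hxleaf with hcl | ⟨c0, hst⟩
        · exact hcl _ _ (fun he => hay (congrArg Subtype.val he))
        · have hstar : Star T F x ↑c0 := by
            refine ⟨hxleaf, c0.2, ?_⟩
            convert hst
          rcases hcond x ↑c0 hstar hxsup hxa hxc with hc | hc
          · have : (c0 : V) = a := sd_unique T hT hstar.adj h.symm hc (sd_refl T _ _)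
            rw [hst]
            refine ⟨fun he => hay (congrArg Subtype.val he), Or.inl ?_⟩
            exact Subtype.ext this.symm
          · have : (c0 : V) = y := sd_unique T hT hstar.adj h2 hc hsyc
            rw [hst]
            refine ⟨fun he => hay (congrArg Subtype.val he), Or.inr ?_⟩
            exact Subtype.ext this.symm
      refine Admissible.cons h h2 q2 hadjmid (ih hpath2 ?_)
      intro v cv hstar hv hvx hvc
      have hva : v ≠ a := fun he => hax (he ▸ hv)
      have hvsup : v ∈ (Walk.cons h (Walk.cons h2 q2)).support := by
        rw [Walk.support_cons]; exact List.mem_cons_of_mem _ hv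
      rcases hcond v cv hstar hvsup hva hvc with hc | hc
      · refine Or.inl ((sd_step T h ?_).mp hc)
        exact sym2_ne (fun h1 _ => hva h1.symm) (fun _ h2 => hvx h2.symm)
      · exact Or.inr hc

lemma cond_of_acc (hT : T.IsTree) {a c : V} (hacc : Accessible T F a c) :
    AccCond T F a c := by
  obtain ⟨p, hp, hadm⟩ := hacc
  intro v cv hstar hva hvc hss
  by_cases hv : v ∈ p.support
  · exact cond_of_adm T F hT p hp hadm v cv hstar hv hva hvc
  · obtain ⟨y, hy, hsd⟩ := sd_branch T hT hva
    exact absurd ⟨y, hy, hsd, sd_of_walk_avoid T p hv hsd⟩ hss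

lemma acc_of_cond (hT : T.IsTree)
    (hCS : ∀ w : V, ¬ IsLeaf T w → CompleteLabel (F w) ∨ ∃ c, StarLabel (F w) c)
    {a c : V} (hcond : AccCond T F a c) : Accessible T F a c := by
  obtain ⟨w0⟩ := hT.isConnected.preconnected a c
  refine ⟨w0.toPath.1, w0.toPath.2, adm_of_cond T F hT hCS w0.toPath.1 w0.toPath.2 ?_⟩
  set p : T.Path a c := w0.toPath with hpdef
  intro v cv hstar hv hva hvc
  refine hcond v cv hstar hva hvc ?_
  rintro ⟨y0, hy0, hy0a, hy0c⟩
  have hspec := Walk.take_spec p.1 hv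
  have hp1 : (p.1.takeUntil v hv).IsPath := p.2.takeUntil hv
  have hp2 : (p.1.dropUntil v hv).IsPath := p.2.dropUntil hv
  obtain ⟨x, hx, hsdx, hxsup⟩ :=
    branch_of_path T hva (p.1.takeUntil v hv).reverse hp1.reverse
  obtain ⟨y, hy, hsdy, hysup⟩ :=
    branch_of_path T hvc (p.1.dropUntil v hv) hp2
  have hxy0 : y0 = x := sd_unique T hT hy0 hx hy0a hsdx
  have hyy0 : y0 = y := sd_unique T hT hy0 hy hy0c hsdy
  have hnodup : (p.1.support).Nodup := p.2.2
  rw [← hspec, Walk.support_append, List.nodup_append] at hnodup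
  have hxmem : x ∈ (p.1.takeUntil v hv).support := by
    have := List.mem_of_mem_tail hxsup
    rw [Walk.support_reverse, List.mem_reverse] at this
    exact this
  have : x ≠ y := by
    intro he
    exact hnodup.2.2 x hxmem y hysup he
  exact this (hxy0 ▸ hyy0)

lemma adj_iff (hT : T.IsTree)
    (hCS : ∀ w : V, ¬ IsLeaf T w → CompleteLabel (F w) ∨ ∃ c, StarLabel (F w) c)
    (x y : {l : V // IsLeaf T l}) :
    (accGraph T F).Adj x y ↔ x ≠ y ∧ AccCond T F ↑x ↑y := by
  show (SimpleGraph.fromRel _).Adj x y ↔ _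
  rw [fromRel_adj]
  constructor
  · rintro ⟨hne, hacc | hacc⟩
    · exact ⟨hne, cond_of_acc T F hT hacc⟩
    · exact ⟨hne, accCond_symm T F (cond_of_acc T F hT hacc)⟩
  · rintro ⟨hne, hcond⟩
    exact ⟨hne, Or.inl (acc_of_cond T F hT hCS hcond)⟩

/-! ### Translation to the statement's reachability form -/

lemma not_reach_iff (hT : T.IsTree) {w c r : V} (h : T.Adj w c) :
    (¬ (T.deleteEdges {s(w, c)}).Reachable w r) ↔ Sd T w c r := by
  constructor
  · intro hr
    rcases sd_dichot T hT h r with hs | hs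
    · exact hs
    · rw [sd_symm_edge] at hs
      exact absurd hs hr
  · intro hs hr
    exact sd_notSelf T hT h (hs.trans hr.symm)

lemma star_of_subtype {w : V} (hw : ¬ IsLeaf T w) (c : ↥(T.neighborSet w))
    (hst : StarLabel (F w) c) : Star T F w ↑c :=
  ⟨hw, c.2, by convert hst⟩

/-! ### The greedy construction of admissible leaves -/

lemma greedy_aux [Fintype V] (hT : T.IsTree)
    (hCS : ∀ w : V, ¬ IsLeaf T w → CompleteLabel (F w) ∨ ∃ c, StarLabel (F w) c)
    (hdeg : ∀ w : V, ¬ IsLeaf T w → 3 ≤ (T.neighborSet w).ncard) :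
    ∀ n : ℕ, ∀ {w x : V}, T.Adj w x → (setOf (Sd T w x)).ncard ≤ n →
      ∃ ℓ, IsLeaf T ℓ ∧ Sd T w x ℓ ∧
        ∀ v cv, Star T F v cv → ¬ SS T v w ℓ → v ≠ w → v ≠ ℓ →
          Sd T v cv w ∨ Sd T v cv ℓ := by
  intro n
  induction n using Nat.strong_induction_on with
  | _ n IH =>
  intro w x hwx hcard
  by_cases hx : IsLeaf T x
  · refine ⟨x, hx, sd_refl T _ _, ?_⟩
    intro v cv _ hss hvw hvx
    exact absurd (ss_adj T hT hwx hvw hvx) hss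
  · -- choose the next vertex y
    have hchoice : ∃ y, T.Adj x y ∧ y ≠ w ∧ (∀ cv', Star T F x cv' → cv' = w ∨ cv' = y) := by
      rcases hCS x hx with hcl | ⟨c0, hst⟩
      · obtain ⟨y, hy, hyw, -⟩ := exists_third T hdeg hx w w
        exact ⟨y, hy, hyw, fun cv' hstar => absurd hstar (fun hs =>
          clique_not_star T F hdeg hx hcl hs)⟩
      · have hstar0 : Star T F x ↑c0 := star_of_subtype T F hx c0 hst
        by_cases hc0w : (c0 : V) = w
        · obtain ⟨y, hy, hyw, -⟩ := exists_third T hdeg hx w w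
          refine ⟨y, hy, hyw, fun cv' hstar => Or.inl ?_⟩
          rw [← hc0w]
          exact (star_centre_unique T F hT hdeg hstar hstar0)
        · refine ⟨↑c0, c0.2, hc0w, fun cv' hstar => Or.inr ?_⟩
          exact (star_centre_unique T F hT hdeg hstar hstar0)
    obtain ⟨y, hxy, hyw, hcase⟩ := hchoice
    have hnxyw : ¬ Sd T x y w := by
      intro hc
      have hne : s(x,w) ≠ s(x,y) :=
        sym2_ne (fun _ h2 => hyw h2.symm) (fun h1 _ => hxy.ne h1)
      exact sd_notSelf T hT hxy ((sd_step T hwx.symm hne).mpr hc)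
    have hsub : ∀ z, Sd T x y z → Sd T w x z :=
      sd_nest T hT hwx (sd_refl T _ _) hxy hnxyw
    have hstrict : (setOf (Sd T x y)).ncard < (setOf (Sd T w x)).ncard := by
      apply Set.ncard_lt_ncard _ (Set.toFinite _)
      constructor
      · exact fun z hz => hsub z hz
      · intro hcon
        exact sd_notSelf T hT hxy (hcon (sd_refl T w x))
    obtain ⟨ℓ, hleaf, hℓ, hprop⟩ :=
      IH (setOf (Sd T x y)).ncard (lt_of_lt_of_le hstrict hcard) hxy le_rfl
    refine ⟨ℓ, hleaf, hsub ℓ hℓ, ?_⟩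
    intro v cv hv hSS hvw hvℓ
    by_cases hvx : v = x
    · subst hvx
      rcases hcase cv hv with rfl | rfl
      · exact Or.inl (sd_refl T _ _)
      · exact Or.inr hℓ
    · have hSS' : ¬ SS T v x ℓ := fun hss => hSS (ss_shift T hT hwx hvw hvx hss)
      rcases hprop v cv hv hSS' hvx hvℓ with hc | hc
      · refine Or.inl ((sd_step T hwx ?_).mpr hc)
        exact sym2_ne (fun h1 _ => hvw h1.symm) (fun _ h2 => hvx h2.symm)
      · exact Or.inr hc

lemma greedy [Fintype V] (hT : T.IsTree)
    (hCS : ∀ w : V, ¬ IsLeaf T w → CompleteLabel (F w) ∨ ∃ c, StarLabel (F w) c)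
    (hdeg : ∀ w : V, ¬ IsLeaf T w → 3 ≤ (T.neighborSet w).ncard)
    {w x : V} (hwx : T.Adj w x) :
    ∃ ℓ, IsLeaf T ℓ ∧ Sd T w x ℓ ∧
      ∀ v cv, Star T F v cv → ¬ SS T v w ℓ → v ≠ w → v ≠ ℓ →
        Sd T v cv w ∨ Sd T v cv ℓ :=
  greedy_aux T F hT hCS hdeg (setOf (Sd T w x)).ncard hwx le_rfl

/-! ### Away pairs -/

def Away (u cu v cv : V) : Prop :=
  Star T F u cu ∧ Star T F v cv ∧ u ≠ v ∧ ¬ Sd T u cu v ∧ ¬ Sd T v cv u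

lemma away_edges_ne {u cu v cv : V} (haw : Away T F u cu v cv) : s(u,cu) ≠ s(v,cv) := by
  intro he
  rw [Sym2.eq_iff] at he
  rcases he with ⟨rfl, rfl⟩ | ⟨rfl, rfl⟩
  · exact haw.2.2.1 rfl
  · exact haw.2.2.2.1 (sd_refl T _ _)

lemma away_disj (hT : T.IsTree) {u cu v cv : V} (haw : Away T F u cu v cv) :
    ∀ z, Sd T u cu z → ¬ Sd T v cv z :=
  sd_disj T hT haw.1.adj haw.2.1.adj haw.2.2.2.1 haw.2.2.2.2 (away_edges_ne T F haw)

lemma away_no_edge (hT : T.IsTree) {u cu v cv a b : V} (haw : Away T F u cu v cv)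
    (hab : T.Adj a b) (h1 : Sd T u cu a ∨ Sd T u cu b) (h2 : Sd T v cv a ∨ Sd T v cv b) :
    False := by
  have hdisj := away_disj T F hT haw
  have hstep : ∀ {p q : V}, T.Adj p q → Sd T u cu p → Sd T v cv q → False := by
    intro p q hpq hup hvq
    by_cases he : s(p,q) = s(u,cu)
    · rw [Sym2.eq_iff] at he
      rcases he with ⟨rfl, rfl⟩ | ⟨rfl, rfl⟩
      · exact sd_notSelf T hT haw.1.adj hup
      · exact haw.2.2.2.2 hvq
    · exact hdisj q ((sd_step T hpq he).mp hup) hvq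
  rcases h1 with h1 | h1 <;> rcases h2 with h2 | h2
  · exact hdisj a h1 h2
  · exact hstep hab h1 h2
  · exact hstep hab.symm h1 h2
  · exact hdisj b h1 h2

lemma no_away_edge [Fintype V] (hT : T.IsTree)
    (hdeg : ∀ w : V, ¬ IsLeaf T w → 3 ≤ (T.neighborSet w).ncard)
    (hnoaw : ¬ ∃ u cu v cv, Away T F u cu v cv) :
    ∃ a b, T.Adj a b ∧ ∀ w cw, Star T F w cw → Sd T w cw a ∨ Sd T w cw b := by
  by_cases hstar : ∃ w cw, Star T F w cw
  · obtain ⟨w0, cw0, hw0⟩ := hstar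
    set S : Set ℕ := {n | ∃ w cw, Star T F w cw ∧ (setOf (Sd T w cw)).ncard = n} with hS
    have hSne : S.Nonempty := ⟨_, w0, cw0, hw0, rfl⟩
    obtain ⟨u, cu, hu, hucard⟩ := Nat.sInf_mem hSne
    refine ⟨u, cu, hu.adj, ?_⟩
    intro w cw hw
    by_cases hwu : w = u
    · subst hwu
      have : cw = cu := star_centre_unique T F hT hdeg hw hu
      subst this
      exact Or.inr (sd_refl T _ _)
    · by_cases h1 : Sd T w cw u
      · exact Or.inl h1
      · exfalso
        by_cases h2 : Sd T u cu w
        · have hsub := sd_nest T hT hu.adj h2 hw.adj h1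
          have hlt : (setOf (Sd T w cw)).ncard < (setOf (Sd T u cu)).ncard := by
            apply Set.ncard_lt_ncard _ (Set.toFinite _)
            constructor
            · exact fun z hz => hsub z hz
            · intro hcon
              exact sd_notSelf T hT hw.adj (hcon h2)
          rw [hucard] at hlt
          have hmem : (setOf (Sd T w cw)).ncard ∈ S := ⟨w, cw, hw, rfl⟩
          exact absurd (Nat.sInf_le hmem) (Nat.not_le.mpr hlt)
        · exact hnoaw ⟨u, cu, w, cw, hu, hw, Ne.symm hwu, h2, h1⟩
  · obtain ⟨v0⟩ := hT.isConnected.nonempty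
    by_cases he : ∃ w, T.Adj v0 w
    · obtain ⟨w, hw⟩ := he
      exact ⟨v0, w, hw, fun w' cw' hs => absurd ⟨w', cw', hs⟩ hstar⟩
    · exfalso
      have hnl : ¬ IsLeaf T v0 := by
        rintro ⟨w, hw, -⟩
        exact he ⟨w, hw⟩
      have h0 : T.neighborSet v0 = ∅ := by
        ext w
        simp only [mem_neighborSet, Set.mem_empty_iff_false, iff_false]
        exact fun hw => he ⟨w, hw⟩
      have := hdeg v0 hnl
      rw [h0] at this
      simp [Set.ncard_empty] at this

/-! ### From an induced P4 to an away pair -/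

lemma killz (hT : T.IsTree) {v cv w cw A B C D z cz : V}
    (hvcv : T.Adj v cv) (hwcw : T.Adj w cw) (hzcz : T.Adj z cz)
    (hSvw : Sd T v cv w) (hSwv : Sd T w cw v)
    (hSvB : Sd T v cv B) (hnA : ¬ Sd T v cv A) (hnC : ¬ Sd T v cv C)
    (hSvD : Sd T v cv D)
    (hzB : Sd T z cz B) (hznA : ¬ Sd T z cz A) (hznD : ¬ Sd T z cz D)
    (hnSS : ¬ SS T z A D)
    (hcd : ¬ SS T z C D → Sd T z cz C ∨ Sd T z cz D)
    (hzv : z ≠ v) (hzA : z ≠ A) (hzC : z ≠ C) (hAv : A ≠ v) : False := by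
  by_cases hSd : Sd T v cv z
  · by_cases hzv' : Sd T z cz v
    · exact hnA (sd_compl T hT hzcz hvcv hzv' hSd hznA hAv)
    · obtain ⟨y, hy, hyv⟩ := sd_branch T hT hzv
      have hA : Sd T z y A := sd_compl T hT hvcv hy hSd hyv hnA hzA.symm
      have hC : Sd T z y C := sd_compl T hT hvcv hy hSd hyv hnC hzC.symm
      have hnD : ¬ Sd T z y D := fun hD => hnSS ⟨y, hy, hA, hD⟩
      have hnSSCD : ¬ SS T z C D := by
        rintro ⟨y', hy', hC', hD'⟩
        exact hnD ((sd_unique T hT hy' hy hC' hC) ▸ hD')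
      rcases hcd hnSSCD with hc | hc
      · have he : cz = y := sd_unique T hT hzcz hy hc hC
        exact hzv' (he ▸ hyv)
      · exact hznD hc
  · obtain ⟨y, hy, hyv⟩ := sd_branch T hT hzv
    have hsub := sd_nest T hT hy hyv hvcv hSd
    have he : cz = y := sd_unique T hT hzcz hy hzB (hsub B hSvB)
    exact hznD (he ▸ (hsub D hSvD))

lemma away_of_p4 [Fintype V] (hT : T.IsTree)
    (hCS : ∀ w : V, ¬ IsLeaf T w → CompleteLabel (F w) ∨ ∃ c, StarLabel (F w) c)
    (hdeg : ∀ w : V, ¬ IsLeaf T w → 3 ≤ (T.neighborSet w).ncard)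
    {a b c d : {l : V // IsLeaf T l}}
    (hne_ac : a ≠ c) (hne_ad : a ≠ d) (hne_bd : b ≠ d)
    (hab : (accGraph T F).Adj a b) (hbc : (accGraph T F).Adj b c)
    (hcd : (accGraph T F).Adj c d)
    (hac : ¬ (accGraph T F).Adj a c) (had : ¬ (accGraph T F).Adj a d)
    (hbd : ¬ (accGraph T F).Adj b d) :
    ∃ u cu u' cu', Away T F u cu u' cu' := by
  set A : V := ↑a with hA
  set B : V := ↑b with hB
  set C : V := ↑c with hC
  set D : V := ↑d with hD
  have cAB : AccCond T F A B := ((adj_iff T F hT hCS a b).mp hab).2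
  have cBC : AccCond T F B C := ((adj_iff T F hT hCS b c).mp hbc).2
  have cCD : AccCond T F C D := ((adj_iff T F hT hCS c d).mp hcd).2
  have hnAC : ¬ AccCond T F A C := fun hcond => hac ((adj_iff T F hT hCS a c).mpr ⟨hne_ac, hcond⟩)
  have hnAD : ¬ AccCond T F A D := fun hcond => had ((adj_iff T F hT hCS a d).mpr ⟨hne_ad, hcond⟩)
  have hnBD : ¬ AccCond T F B D := fun hcond => hbd ((adj_iff T F hT hCS b d).mpr ⟨hne_bd, hcond⟩)
  unfold AccCond at hnAC hnAD hnBD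
  push_neg at hnAC hnAD hnBD
  obtain ⟨v, cv, hstarv, hvA, hvC, hnSSvAC, hnSdvA, hnSdvC⟩ := hnAC
  obtain ⟨w, cw, hstarw, hwB, hwD, hnSSwBD, hnSdwB, hnSdwD⟩ := hnBD
  obtain ⟨z, cz, hstarz, hzA, hzD, hnSSzAD, hznA, hznD⟩ := hnAD
  have hvB : v ≠ B := star_ne_leaf T F hstarv b.2
  have hvD : v ≠ D := star_ne_leaf T F hstarv d.2
  have hwA : w ≠ A := star_ne_leaf T F hstarw a.2
  have hwC : w ≠ C := star_ne_leaf T F hstarw c.2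
  have hzB : z ≠ B := star_ne_leaf T F hstarz b.2
  have hzC : z ≠ C := star_ne_leaf T F hstarz c.2
  have hSvB : Sd T v cv B := by
    rcases not_ss_mid T hT (b := B) hnSSvAC with h | h
    · exact (cAB v cv hstarv hvA hvB h).resolve_left hnSdvA
    · exact (cBC v cv hstarv hvB hvC h).resolve_right hnSdvC
  have hSwC : Sd T w cw C := by
    rcases not_ss_mid T hT (b := C) hnSSwBD with h | h
    · exact (cBC w cw hstarw hwB hwC h).resolve_left hnSdwB
    · exact (cCD w cw hstarw hwC hwD h).resolve_right hnSdwD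
  have hvw : v ≠ w := by
    intro he
    subst he
    have : cv = cw := star_centre_unique T F hT hdeg hstarv hstarw
    subst this
    exact hnSdwB hSvB
  have hzdisj : Sd T z cz B ∨ Sd T z cz C := by
    rcases not_ss_mid T hT (b := B) hnSSzAD with h | h
    · exact Or.inl ((cAB z cz hstarz hzA hzB h).resolve_left hznA)
    · rcases not_ss_mid T hT (b := C) h with h' | h'
      · exact cBC z cz hstarz hzB hzC h'
      · exact Or.inr ((cCD z cz hstarz hzC hzD h').resolve_right hznD)
  have hno1 : ¬ Sd T v cv w := by
    intro hSvw
    have hSwv : Sd T w cw v := by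
      by_contra hSwv
      exact hnSdvC (sd_nest T hT hstarv.adj hSvw hstarw.adj hSwv C hSwC)
    have hSvD : Sd T v cv D :=
      sd_compl T hT hstarw.adj hstarv.adj hSwv hSvw hnSdwD hvD.symm
    have hSwA : Sd T w cw A :=
      sd_compl T hT hstarv.adj hstarw.adj hSvw hSwv hnSdvA hwA.symm
    by_cases hzv : z = v
    · subst hzv
      have : cz = cv := star_centre_unique T F hT hdeg hstarz hstarv
      subst this
      exact hznD hSvD
    by_cases hzw : z = w
    · subst hzw
      have : cz = cw := star_centre_unique T F hT hdeg hstarz hstarw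
      subst this
      exact hznA hSwA
    rcases hzdisj with hzB' | hzC'
    · exact killz T hT hstarv.adj hstarw.adj hstarz.adj hSvw hSwv hSvB hnSdvA hnSdvC hSvD
        hzB' hznA hznD hnSSzAD
        (fun hss => cCD z cz hstarz hzC hzD hss) hzv hzA hzC (hvA.symm)
    · exact killz T hT hstarw.adj hstarv.adj hstarz.adj hSwv hSvw hSwC hnSdwD hnSdwB hSwA
        hzC' hznD hznA (fun hss => hnSSzAD (ss_symm T hss))
        (fun hss => Or.symm (cAB z cz hstarz hzA hzB (fun h => hss (ss_symm T h)))) hzw hzD hzB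
        (hwD.symm)
  have hno2 : ¬ Sd T w cw v := by
    intro hSwv
    exact hnSdwB (sd_nest T hT hstarw.adj hSwv hstarv.adj hno1 B hSvB)
  exact ⟨v, cv, w, cw, hstarv, hstarw, hvw, hno1, hno2⟩

/-! ### From an away pair to an induced P4 -/

lemma between_dist (hT : T.IsTree) {z yu yv u' v' : V} (hyu : T.Adj z yu) (hyv : T.Adj z yv)
    (hne : yu ≠ yv) (hu : Sd T z yu u') (hv : Sd T z yv v') :
    T.dist u' z < T.dist u' v' ∧ T.dist z v' < T.dist u' v' := by
  obtain ⟨p, hp⟩ := hT.isConnected.exists_walk_length_eq_dist u' v'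
  have hz : z ∈ p.support := by
    by_contra hzp
    exact hne (sd_unique T hT hyu hyv (sd_of_walk_avoid T p hzp hu) hv)
  have hsplit := Walk.take_spec p hz
  have hlen : (p.takeUntil z hz).length + (p.dropUntil z hz).length = p.length := by
    have := congrArg Walk.length hsplit
    rwa [Walk.length_append] at this
  have h1 : T.dist u' z ≤ (p.takeUntil z hz).length := dist_le _
  have h2 : T.dist z v' ≤ (p.dropUntil z hz).length := dist_le _
  have hz1 : (p.takeUntil z hz).length ≠ 0 := by
    intro h0
    have : u' = z := Walk.eq_of_length_eq_zero h0
    subst this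
    exact sd_notSelf T hT hyu hu
  have hz2 : (p.dropUntil z hz).length ≠ 0 := by
    intro h0
    have : z = v' := Walk.eq_of_length_eq_zero h0
    subst this
    exact sd_notSelf T hT hyv hv
  omega

lemma p4_of_away [Fintype V] (hT : T.IsTree)
    (hCS : ∀ w : V, ¬ IsLeaf T w → CompleteLabel (F w) ∨ ∃ c, StarLabel (F w) c)
    (hdeg : ∀ w : V, ¬ IsLeaf T w → 3 ≤ (T.neighborSet w).ncard)
    (haw0 : ∃ u cu v cv, Away T F u cu v cv) :
    ∃ a b c d : {l : V // IsLeaf T l},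
      a ≠ b ∧ a ≠ c ∧ a ≠ d ∧ b ≠ c ∧ b ≠ d ∧ c ≠ d ∧
      (accGraph T F).Adj a b ∧ (accGraph T F).Adj b c ∧ (accGraph T F).Adj c d ∧
      ¬ (accGraph T F).Adj a c ∧ ¬ (accGraph T F).Adj a d ∧ ¬ (accGraph T F).Adj b d := by
  set S : Set ℕ := {n | ∃ u cu v cv, Away T F u cu v cv ∧ T.dist u v = n} with hSdef
  have hSne : S.Nonempty := by
    obtain ⟨u, cu, v, cv, haw⟩ := haw0
    exact ⟨_, u, cu, v, cv, haw, rfl⟩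
  obtain ⟨u, cu, v, cv, haw, hdist⟩ := Nat.sInf_mem hSne
  have hmin : ∀ u' cu' v' cv', Away T F u' cu' v' cv' → T.dist u v ≤ T.dist u' v' := by
    intro u' cu' v' cv' ha
    have hmem : T.dist u' v' ∈ S := ⟨u', cu', v', cv', ha, rfl⟩
    rw [hdist]
    exact Nat.sInf_le hmem
  obtain ⟨hstaru, hstarv, huv, hnuv, hnvu⟩ := haw
  have hawfull : Away T F u cu v cv := ⟨hstaru, hstarv, huv, hnuv, hnvu⟩
  have hdisjUV := away_disj T F hT hawfull
  obtain ⟨p, hup, hpv⟩ := sd_branch T hT huv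
  obtain ⟨q, hvq, hqu⟩ := sd_branch T hT (Ne.symm huv)
  have hpcu : p ≠ cu := fun he => hnuv (he ▸ hpv)
  have hqcv : q ≠ cv := fun he => hnvu (he ▸ hqu)
  obtain ⟨t, hut, htcu, htp⟩ := exists_third T hdeg hstaru.1 cu p
  obtain ⟨s', hvs, hscv, hsq⟩ := exists_third T hdeg hstarv.1 cv q
  obtain ⟨A, hAleaf, hSA, hApr⟩ := greedy T F hT hCS hdeg hut
  obtain ⟨B, hBleaf, hSB, hBpr⟩ := greedy T F hT hCS hdeg hstaru.adj
  obtain ⟨C, hCleaf, hSC, hCpr⟩ := greedy T F hT hCS hdeg hstarv.adj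
  obtain ⟨D, hDleaf, hSD, hDpr⟩ := greedy T F hT hCS hdeg hvs
  -- auxiliary non-membership facts
  have hnsu : ¬ Sd T v s' u := fun hc => hsq (sd_unique T hT hvs hvq hc hqu)
  have hntv : ¬ Sd T u t v := fun hc => htp (sd_unique T hT hut hup hc hpv)
  -- projections to branches at u resp. v
  have hCp : Sd T u p C := sd_nest T hT hup hpv hstarv.adj hnvu C hSC
  have hDp : Sd T u p D := sd_nest T hT hup hpv hvs hnsu D hSD
  have hBq : Sd T v q B := sd_nest T hT hvq hqu hstaru.adj hnuv B hSB
  have hAq : Sd T v q A := sd_nest T hT hvq hqu hut hntv A hSA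
  -- distinctness
  have hAB : A ≠ B := fun he => htcu (sd_unique T hT hut hstaru.adj hSA (he ▸ hSB))
  have hAC : A ≠ C := fun he => htp (sd_unique T hT hut hup hSA (he ▸ hCp))
  have hAD : A ≠ D := fun he => htp (sd_unique T hT hut hup hSA (he ▸ hDp))
  have hBC : B ≠ C := fun he => hqcv (sd_unique T hT hvq hstarv.adj hBq (he ▸ hSC))
  have hBD : B ≠ D := fun he => hsq (sd_unique T hT hvs hvq (he ▸ hSD) hBq)
  have hCD : C ≠ D := fun he => hscv (sd_unique T hT hvs hstarv.adj (he ▸ hSD) hSC)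
  -- leaf ≠ internal nodes
  have huA : u ≠ A := star_ne_leaf T F hstaru hAleaf
  have huB : u ≠ B := star_ne_leaf T F hstaru hBleaf
  have huC : u ≠ C := star_ne_leaf T F hstaru hCleaf
  have huD : u ≠ D := star_ne_leaf T F hstaru hDleaf
  have hvB : v ≠ B := star_ne_leaf T F hstarv hBleaf
  have hvC : v ≠ C := star_ne_leaf T F hstarv hCleaf
  have hvD : v ≠ D := star_ne_leaf T F hstarv hDleaf
  -- adjacency A-B
  have condAB : AccCond T F A B := by
    intro z cz hstarz hzA hzB hnSS
    by_cases hzu : z = u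
    · subst hzu
      have : cz = cu := star_centre_unique T F hT hdeg hstarz hstaru
      subst this
      exact Or.inr hSB
    by_cases h1 : Sd T u t z
    · have hncu : ¬ Sd T u cu z := fun hc => htcu (sd_unique T hT hut hstaru.adj h1 hc)
      have hnSS' : ¬ SS T z u A := by
        rintro ⟨y, hy, hyu, hyA⟩
        exact hnSS ⟨y, hy, hyA, sd_nest T hT hy hyu hstaru.adj hncu B hSB⟩
      rcases hApr z cz hstarz hnSS' hzu hzA with hc | hc
      · exact Or.inr (sd_nest T hT hstarz.adj hc hstaru.adj hncu B hSB)
      · exact Or.inl hc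
    · by_cases h2 : Sd T u cu z
      · have hnSS' : ¬ SS T z u B := by
          rintro ⟨y, hy, hyu, hyB⟩
          exact hnSS ⟨y, hy, sd_nest T hT hy hyu hut h1 A hSA, hyB⟩
        rcases hBpr z cz hstarz hnSS' hzu hzB with hc | hc
        · exact Or.inl (sd_nest T hT hstarz.adj hc hut h1 A hSA)
        · exact Or.inr hc
      · exfalso
        obtain ⟨y, hy, hyu⟩ := sd_branch T hT hzu
        exact hnSS ⟨y, hy, sd_nest T hT hy hyu hut h1 A hSA,
          sd_nest T hT hy hyu hstaru.adj h2 B hSB⟩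
  -- adjacency C-D
  have condCD : AccCond T F C D := by
    intro z cz hstarz hzC hzD hnSS
    by_cases hzv : z = v
    · subst hzv
      have : cz = cv := star_centre_unique T F hT hdeg hstarz hstarv
      subst this
      exact Or.inl hSC
    by_cases h1 : Sd T v cv z
    · have hns : ¬ Sd T v s' z := fun hc => hscv (sd_unique T hT hvs hstarv.adj hc h1)
      have hnSS' : ¬ SS T z v C := by
        rintro ⟨y, hy, hyv, hyC⟩
        exact hnSS ⟨y, hy, hyC, sd_nest T hT hy hyv hvs hns D hSD⟩
      rcases hCpr z cz hstarz hnSS' hzv hzC with hc | hc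
      · exact Or.inr (sd_nest T hT hstarz.adj hc hvs hns D hSD)
      · exact Or.inl hc
    · by_cases h2 : Sd T v s' z
      · have hnSS' : ¬ SS T z v D := by
          rintro ⟨y, hy, hyv, hyD⟩
          exact hnSS ⟨y, hy, sd_nest T hT hy hyv hstarv.adj h1 C hSC, hyD⟩
        rcases hDpr z cz hstarz hnSS' hzv hzD with hc | hc
        · exact Or.inl (sd_nest T hT hstarz.adj hc hstarv.adj h1 C hSC)
        · exact Or.inr hc
      · exfalso
        obtain ⟨y, hy, hyv⟩ := sd_branch T hT hzv
        exact hnSS ⟨y, hy, sd_nest T hT hy hyv hstarv.adj h1 C hSC,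
          sd_nest T hT hy hyv hvs h2 D hSD⟩
  -- adjacency B-C (uses minimality)
  have condBC : AccCond T F B C := by
    intro z cz hstarz hzB hzC hnSS
    by_cases hzu : z = u
    · subst hzu
      have : cz = cu := star_centre_unique T F hT hdeg hstarz hstaru
      subst this
      exact Or.inl hSB
    by_cases hzv : z = v
    · subst hzv
      have : cz = cv := star_centre_unique T F hT hdeg hstarz hstarv
      subst this
      exact Or.inr hSC
    by_cases h1 : Sd T u cu z
    · have hnvcvz : ¬ Sd T v cv z := hdisjUV z h1
      have hnSS' : ¬ SS T z u B := by
        rintro ⟨y, hy, hyu, hyB⟩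
        have hyv : Sd T z y v := sd_compl T hT hstaru.adj hy h1 hyu hnuv (Ne.symm hzv)
        exact hnSS ⟨y, hy, hyB, sd_nest T hT hy hyv hstarv.adj hnvcvz C hSC⟩
      rcases hBpr z cz hstarz hnSS' hzu hzB with hc | hc
      · have hv' : Sd T z cz v := sd_compl T hT hstaru.adj hstarz.adj h1 hc hnuv (Ne.symm hzv)
        exact Or.inr (sd_nest T hT hstarz.adj hv' hstarv.adj hnvcvz C hSC)
      · exact Or.inl hc
    · by_cases h2 : Sd T v cv z
      · have hnSS' : ¬ SS T z v C := by
          rintro ⟨y, hy, hyv, hyC⟩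
          have hyu : Sd T z y u := sd_compl T hT hstarv.adj hy h2 hyv hnvu (Ne.symm hzu)
          exact hnSS ⟨y, hy, sd_nest T hT hy hyu hstaru.adj h1 B hSB, hyC⟩
        rcases hCpr z cz hstarz hnSS' hzv hzC with hc | hc
        · have hu' : Sd T z cz u := sd_compl T hT hstarv.adj hstarz.adj h2 hc hnvu (Ne.symm hzu)
          exact Or.inl (sd_nest T hT hstarz.adj hu' hstaru.adj h1 B hSB)
        · exact Or.inr hc
      · obtain ⟨yu, hyu, hyuu⟩ := sd_branch T hT hzu
        obtain ⟨yv, hyv', hyvv⟩ := sd_branch T hT hzv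
        by_cases hyy : yu = yv
        · exact absurd ⟨yv, hyv', hyy ▸ sd_nest T hT hyu hyuu hstaru.adj h1 B hSB,
            sd_nest T hT hyv' hyvv hstarv.adj h2 C hSC⟩ hnSS
        · exfalso
          have hd := between_dist T hT hyu hyv' hyy hyuu hyvv
          have hSzu : Sd T z cz u := by
            by_contra hcon
            have haw1 : Away T F u cu z cz := ⟨hstaru, hstarz, Ne.symm hzu, h1, hcon⟩
            exact absurd (hmin u cu z cz haw1) (Nat.not_le.mpr hd.1)
          have hcz : cz = yu := sd_unique T hT hstarz.adj hyu hSzu hyuu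
          have hnzv : ¬ Sd T z cz v := by
            intro hc
            exact hyy (hcz.symm.trans (sd_unique T hT hstarz.adj hyv' hc hyvv))
          have haw2 : Away T F z cz v cv := ⟨hstarz, hstarv, hzv, hnzv, h2⟩
          exact absurd (hmin z cz v cv haw2) (Nat.not_le.mpr hd.2)
  -- non-adjacency conditions
  have notAC : ¬ AccCond T F A C := by
    intro hcond
    have hnSS : ¬ SS T u A C := by
      rintro ⟨y, hy, hyA, hyC⟩
      exact htp ((sd_unique T hT hut hy hSA hyA).trans (sd_unique T hT hy hup hyC hCp))
    rcases hcond u cu hstaru huA huC hnSS with hc | hc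
    · exact htcu (sd_unique T hT hut hstaru.adj hSA hc)
    · exact hpcu (sd_unique T hT hup hstaru.adj hCp hc)
  have notAD : ¬ AccCond T F A D := by
    intro hcond
    have hnSS : ¬ SS T u A D := by
      rintro ⟨y, hy, hyA, hyD⟩
      exact htp ((sd_unique T hT hut hy hSA hyA).trans (sd_unique T hT hy hup hyD hDp))
    rcases hcond u cu hstaru huA huD hnSS with hc | hc
    · exact htcu (sd_unique T hT hut hstaru.adj hSA hc)
    · exact hpcu (sd_unique T hT hup hstaru.adj hDp hc)
  have notBD : ¬ AccCond T F B D := by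
    intro hcond
    have hnSS : ¬ SS T v B D := by
      rintro ⟨y, hy, hyB, hyD⟩
      exact hsq (((sd_unique T hT hvq hy hBq hyB).trans (sd_unique T hT hy hvs hyD hSD)).symm)
    rcases hcond v cv hstarv hvB hvD hnSS with hc | hc
    · exact hqcv (sd_unique T hT hvq hstarv.adj hBq hc)
    · exact hscv (sd_unique T hT hvs hstarv.adj hSD hc)
  -- assemble
  refine ⟨⟨A, hAleaf⟩, ⟨B, hBleaf⟩, ⟨C, hCleaf⟩, ⟨D, hDleaf⟩,
    fun he => hAB (congrArg Subtype.val he), fun he => hAC (congrArg Subtype.val he),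
    fun he => hAD (congrArg Subtype.val he), fun he => hBC (congrArg Subtype.val he),
    fun he => hBD (congrArg Subtype.val he), fun he => hCD (congrArg Subtype.val he),
    ?_, ?_, ?_, ?_, ?_, ?_⟩
  · exact (adj_iff T F hT hCS _ _).mpr ⟨fun he => hAB (congrArg Subtype.val he), condAB⟩
  · exact (adj_iff T F hT hCS _ _).mpr ⟨fun he => hBC (congrArg Subtype.val he), condBC⟩
  · exact (adj_iff T F hT hCS _ _).mpr ⟨fun he => hCD (congrArg Subtype.val he), condCD⟩
  · exact fun hadj => notAC ((adj_iff T F hT hCS _ _).mp hadj).2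
  · exact fun hadj => notAD ((adj_iff T F hT hCS _ _).mp hadj).2
  · exact fun hadj => notBD ((adj_iff T F hT hCS _ _).mp hadj).2

end Stmt8Aux

open Stmt8Aux

/-- the accessibility graph of a reduced clique-star labelled tree has no
induced `P₄` iff there is a clique node, or a tree-edge, of `T` towards which every
star node is oriented (i.e. removing the tree-edge carrying the centre of the star
disconnects the star node from that clique node, resp. from an endpoint of that edge). -/

theorem stmt8 [Fintype V] (T : SimpleGraph V) (hT : T.IsTree)
    (F : ∀ w : V, SimpleGraph (T.neighborSet w))
    -- every label is a clique or a star: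
    (hCS : ∀ w : V, ¬ IsLeaf T w → CompleteLabel (F w) ∨ ∃ c, StarLabel (F w) c)
    -- (T,F) is reduced:
    (hdeg : ∀ w : V, ¬ IsLeaf T w → 3 ≤ (T.neighborSet w).ncard)
    (hredK : ∀ a b : V, T.Adj a b → ¬ IsLeaf T a → ¬ IsLeaf T b →
      ¬ (CompleteLabel (F a) ∧ CompleteLabel (F b)))
    (hredS : ∀ a b : V, T.Adj a b →
      ∀ (ca : T.neighborSet a) (cb : T.neighborSet b),
        StarLabel (F a) ca → StarLabel (F b) cb → (ca : V) = b → (cb : V) = a) :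
    (¬ ∃ a b c d : {l : V // IsLeaf T l},
        a ≠ b ∧ a ≠ c ∧ a ≠ d ∧ b ≠ c ∧ b ≠ d ∧ c ≠ d ∧
        (accGraph T F).Adj a b ∧ (accGraph T F).Adj b c ∧ (accGraph T F).Adj c d ∧
        ¬ (accGraph T F).Adj a c ∧ ¬ (accGraph T F).Adj a d ∧ ¬ (accGraph T F).Adj b d) ↔
    ((∃ r : V, ¬ IsLeaf T r ∧ CompleteLabel (F r) ∧
        ∀ w : V, ¬ IsLeaf T w → ∀ c : T.neighborSet w, StarLabel (F w) c →
          ¬ (T.deleteEdges {s(w, (c : V))}).Reachable w r) ∨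
      (∃ a b : V, T.Adj a b ∧
        ∀ w : V, ¬ IsLeaf T w → ∀ c : T.neighborSet w, StarLabel (F w) c →
          (¬ (T.deleteEdges {s(w, (c : V))}).Reachable w a ∨
            ¬ (T.deleteEdges {s(w, (c : V))}).Reachable w b))) := by
  constructor
  · intro hP4
    by_cases haw : ∃ u cu v cv, Away T F u cu v cv
    · exact absurd (p4_of_away T F hT hCS hdeg haw) hP4
    · obtain ⟨a, b, hab, hprop⟩ := no_away_edge T F hT hdeg haw
      right
      refine ⟨a, b, hab, ?_⟩
      intro w hw c hc
      have hstar : Star T F w ↑c := star_of_subtype T F hw c hc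
      have hadj : T.Adj w ↑c := c.2
      rcases hprop w ↑c hstar with h | h
      · exact Or.inl ((not_reach_iff T hT hadj).mpr h)
      · exact Or.inr ((not_reach_iff T hT hadj).mpr h)
  · rintro hR ⟨a, b, c, d, hab', hac', had', hbc', hbd', hcd',
      hab, hbc, hcd, hac, had, hbd⟩
    obtain ⟨u, cu, v, cv, haw⟩ :=
      away_of_p4 T F hT hCS hdeg hac' had' hbd' hab hbc hcd hac had hbd
    obtain ⟨hstaru, hstarv, huv, hnuv, hnvu⟩ := haw
    have hawfull : Away T F u cu v cv := ⟨hstaru, hstarv, huv, hnuv, hnvu⟩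
    obtain ⟨hadju, hstu⟩ := hstaru.2
    obtain ⟨hadjv, hstv⟩ := hstarv.2
    rcases hR with ⟨r, hrleaf, hrK, hrprop⟩ | ⟨e1, e2, he, hprop⟩
    · have h1 : Sd T u cu r :=
        (not_reach_iff T hT hadju).mp (hrprop u hstaru.1 ⟨cu, hadju⟩ hstu)
      have h2 : Sd T v cv r :=
        (not_reach_iff T hT hadjv).mp (hrprop v hstarv.1 ⟨cv, hadjv⟩ hstv)
      exact away_disj T F hT hawfull r h1 h2
    · have h1 : Sd T u cu e1 ∨ Sd T u cu e2 := by
        rcases hprop u hstaru.1 ⟨cu, hadju⟩ hstu with h | h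
        · exact Or.inl ((not_reach_iff T hT hadju).mp h)
        · exact Or.inr ((not_reach_iff T hT hadju).mp h)
      have h2 : Sd T v cv e1 ∨ Sd T v cv e2 := by
        rcases hprop v hstarv.1 ⟨cv, hadjv⟩ hstv with h | h
        · exact Or.inl ((not_reach_iff T hT hadjv).mp h)
        · exact Or.inr ((not_reach_iff T hT hadjv).mp h)
      exact away_no_edge T F hT hawfull he h1 h2
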